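/- Let X be a Banach function space over a finite measure space which has the weak Banach-Saks property, and let m : Σ → X be a σ-additive positive vector measure (m(A) ≥ 0 for all A ∈ Σ). If {hₙ} ⊆ L¹(m) is weakly null and the functions hₙ have pairwise disjoint supports, then there exists a subsequence {h'ₙ} of {hₙ} such that ‖(1/n)∑_{k=1}^n h'ₖ‖_{L¹(m)} → 0 as n → ∞. -/

import Mathlib

open MeasureTheory Filter Topology
open scoped ENNReal

noncomputable section

namespace Paper

variable {Ω : Type*} [MeasurableSpace Ω]
variable {X : Type*} [NormedAddCommGroup X] [NormedSpace ℝ X]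

/-- The signed measure `x* ∘ m` for a functional `x*` and vector measure `m`. -/
def dualApply (m : VectorMeasure Ω X) (x : X →L[ℝ] ℝ) : SignedMeasure Ω :=
  m.mapRange x.toLinearMap.toAddMonoidHom x.continuous

/-- The semivariation `‖m‖(A)` of a vector measure. -/
def semivar (m : VectorMeasure Ω X) (A : Set Ω) : ℝ≥0∞ :=
  ⨆ x : {x : X →L[ℝ] ℝ // ‖x‖ ≤ 1}, (dualApply m x.1).totalVariation A

/-- `P` holds `‖m‖`-almost everywhere. -/
def MAE (m : VectorMeasure Ω X) (P : Ω → Prop) : Prop :=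
  ∃ N : Set Ω, MeasurableSet N ∧ semivar m N = 0 ∧ ∀ ω ∉ N, P ω

/-- The integral `∫_A f ds` of a real function with respect to a signed measure. -/
def sIntegral (s : SignedMeasure Ω) (f : Ω → ℝ) (A : Set Ω) : ℝ :=
  (∫ ω in A, f ω ∂s.toJordanDecomposition.posPart) -
    ∫ ω in A, f ω ∂s.toJordanDecomposition.negPart

/-- `f` is integrable with respect to the vector measure `m` (Bartle-Dunford-Schwartz). -/
def MIntegrable (m : VectorMeasure Ω X) (f : Ω → ℝ) : Prop :=
  Measurable f ∧
  (∀ x : X →L[ℝ] ℝ, Integrable f ((dualApply m x).totalVariation)) ∧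
  (∀ A : Set Ω, MeasurableSet A →
    ∃ v : X, ∀ x : X →L[ℝ] ℝ, x v = sIntegral (dualApply m x) f A)

open Classical in
/-- The vector integral `∫_A f dm ∈ X`. -/
def mIntegral (m : VectorMeasure Ω X) (f : Ω → ℝ) (A : Set Ω) : X :=
  if h : ∃ v : X, ∀ x : X →L[ℝ] ℝ, x v = sIntegral (dualApply m x) f A then h.choose
  else 0

/-- The norm of `L¹(m)`: `‖f‖ = sup_{‖x*‖ ≤ 1} ∫ |f| d|x*m|`. -/
def mNorm (m : VectorMeasure Ω X) (f : Ω → ℝ) : ℝ :=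
  ⨆ x : {x : X →L[ℝ] ℝ // ‖x‖ ≤ 1}, ∫ ω, |f ω| ∂(dualApply m x.1).totalVariation

/-- The vector measure `m` is separable: the pseudometric space `(Σ, d_m)`,
`d_m(A,B) = ‖m‖(A △ B)`, is separable. -/
def SeparableVM (m : VectorMeasure Ω X) : Prop :=
  ∃ D : Set (Set Ω), D.Countable ∧ (∀ B ∈ D, MeasurableSet B) ∧
    ∀ A : Set Ω, MeasurableSet A → ∀ ε : ℝ, 0 < ε →
      ∃ B ∈ D, semivar m (symmDiff A B) < ENNReal.ofReal ε

section FunctionSpace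

variable {S : Type*} [MeasurableSpace S]

/-- `T` is a bounded linear functional on the function space determined by the
membership predicate `mem` and the norm `nrm`. -/
def IsBddLinFunctional (mem : (S → ℝ) → Prop) (nrm : (S → ℝ) → ℝ)
    (T : (S → ℝ) → ℝ) : Prop :=
  (∀ f g, mem f → mem g → T (f + g) = T f + T g) ∧
  (∀ (c : ℝ) (f), mem f → T (c • f) = c * T f) ∧
  (∃ C : ℝ, ∀ f, mem f → |T f| ≤ C * nrm f)

/-- `f` is a weakly null sequence in the function space `(mem, nrm)`. -/
def WeaklyNullSeq (mem : (S → ℝ) → Prop) (nrm : (S → ℝ) → ℝ) (f : ℕ → S → ℝ) : Prop :=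
  ∀ T : (S → ℝ) → ℝ, IsBddLinFunctional mem nrm T →
    Tendsto (fun n => T (f n)) atTop (nhds 0)

/-- The set `K` has uniformly absolutely continuous norm in the function space with
norm `nrm` over the measure `μ`. -/
def UnifACNorm (μ : Measure S) (nrm : (S → ℝ) → ℝ) (K : Set (S → ℝ)) : Prop :=
  ∀ ε : ℝ, 0 < ε → ∃ δ : ℝ, 0 < δ ∧ ∀ A : Set S, MeasurableSet A →
    μ A < ENNReal.ofReal δ → ∀ f ∈ K, nrm (A.indicator f) ≤ ε

/-- The subsequence splitting property for the function space `(mem, nrm)` over `μ`. -/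
def HasSSP (μ : Measure S) (mem : (S → ℝ) → Prop) (nrm : (S → ℝ) → ℝ) : Prop :=
  ∀ f : ℕ → S → ℝ, (∀ n, mem (f n)) → (∃ C : ℝ, ∀ n, nrm (f n) ≤ C) →
    ∃ σ : ℕ → ℕ, StrictMono σ ∧
      ∃ g h : ℕ → S → ℝ,
        (∀ n, mem (g n)) ∧ (∀ n, mem (h n)) ∧
        (∀ n, f (σ n) = g n + h n) ∧
        (∀ n, (fun s => g n s * h n s) =ᵐ[μ] 0) ∧
        UnifACNorm μ nrm (Set.range g) ∧
        (∀ i j, i ≠ j → (fun s => h i s * h j s) =ᵐ[μ] 0)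

/-- The weak Banach-Saks property for the function space `(mem, nrm)`. -/
def HasWBS (mem : (S → ℝ) → Prop) (nrm : (S → ℝ) → ℝ) : Prop :=
  ∀ f : ℕ → S → ℝ, (∀ n, mem (f n)) → WeaklyNullSeq mem nrm f →
    ∃ σ : ℕ → ℕ, StrictMono σ ∧
      Tendsto (fun n : ℕ => nrm ((n : ℝ)⁻¹ • ∑ k ∈ Finset.range n, f (σ k))) atTop (nhds 0)

end FunctionSpace

/-- A Banach function space over `(S, μ)`: an (abstract) normed space `X` together with
a linear embedding `J` into measurable functions on `S`, separating points modulo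
`μ`-null sets and satisfying the ideal property. -/
structure BFS (S : Type*) [MeasurableSpace S] (μ : Measure S)
    (X : Type*) [NormedAddCommGroup X] [NormedSpace ℝ X] where
  J : X →ₗ[ℝ] (S → ℝ)
  aemeasurable : ∀ x : X, AEMeasurable (J x) μ
  eq_zero : ∀ x : X, J x =ᵐ[μ] 0 → x = 0
  ideal : ∀ (x : X) (g : S → ℝ), AEMeasurable g μ →
    (∀ᵐ s ∂μ, |g s| ≤ |J x s|) → ∃ y : X, J y =ᵐ[μ] g ∧ ‖y‖ ≤ ‖x‖

variable {S : Type*} [MeasurableSpace S] {μ : Measure S}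

/-- The set `K ⊆ X` has uniformly absolutely continuous norm in the B.f.s. `X`. -/
def BFS.UnifAC (B : BFS S μ X) (K : Set X) : Prop :=
  ∀ ε : ℝ, 0 < ε → ∃ δ : ℝ, 0 < δ ∧ ∀ A : Set S, MeasurableSet A →
    μ A < ENNReal.ofReal δ → ∀ x ∈ K, ∀ y : X, B.J y =ᵐ[μ] A.indicator (B.J x) → ‖y‖ ≤ ε

/-- The B.f.s. `X` has absolutely continuous norm. -/
def BFS.ACNorm (B : BFS S μ X) : Prop :=
  ∀ x : X, ∀ ε : ℝ, 0 < ε → ∃ δ : ℝ, 0 < δ ∧ ∀ A : Set S, MeasurableSet A →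
    μ A < ENNReal.ofReal δ → ∀ y : X, B.J y =ᵐ[μ] A.indicator (B.J x) → ‖y‖ ≤ ε

/-- The subsequence splitting property for the B.f.s. `X`. -/
def BFS.SSP (B : BFS S μ X) : Prop :=
  ∀ f : ℕ → X, (∃ C : ℝ, ∀ n, ‖f n‖ ≤ C) →
    ∃ σ : ℕ → ℕ, StrictMono σ ∧
      ∃ g h : ℕ → X,
        (∀ n, f (σ n) = g n + h n) ∧
        (∀ n, (fun s => B.J (g n) s * B.J (h n) s) =ᵐ[μ] 0) ∧
        B.UnifAC (Set.range g) ∧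
        (∀ i j, i ≠ j → (fun s => B.J (h i) s * B.J (h j) s) =ᵐ[μ] 0)

/-- The weak Banach-Saks property for a normed space `Z`: every weakly null sequence has a
subsequence whose arithmetic means converge to zero in norm. -/
def WeakBanachSaks (Z : Type*) [NormedAddCommGroup Z] [NormedSpace ℝ Z] : Prop :=
  ∀ z : ℕ → Z, (∀ φ : Z →L[ℝ] ℝ, Tendsto (fun n => φ (z n)) atTop (nhds 0)) →
    ∃ σ : ℕ → ℕ, StrictMono σ ∧
      Tendsto (fun n : ℕ => ‖(n : ℝ)⁻¹ • ∑ k ∈ Finset.range n, z (σ k)‖) atTop (nhds 0)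


/-! ### Auxiliary machinery for the proof of Statement 10 -/

section AuxStatement10

lemma dualApply_apply (m : VectorMeasure Ω X) (x : X →L[ℝ] ℝ) (A : Set Ω) :
    dualApply m x A = x (m A) :=
  VectorMeasure.mapRange_apply _ x.continuous

lemma sm_apply (s : SignedMeasure Ω) {A : Set Ω} (hA : MeasurableSet A) :
    s A = (s.toJordanDecomposition.posPart A).toReal -
      (s.toJordanDecomposition.negPart A).toReal := by
  conv_lhs => rw [← s.toSignedMeasure_toJordanDecomposition]
  rw [JordanDecomposition.toSignedMeasure, VectorMeasure.sub_apply,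
    Measure.toSignedMeasure_apply_measurable hA, Measure.toSignedMeasure_apply_measurable hA]
  rfl

lemma posPart_le_tv (s : SignedMeasure Ω) :
    s.toJordanDecomposition.posPart ≤ s.totalVariation :=
  Measure.le_add_right le_rfl

lemma negPart_le_tv (s : SignedMeasure Ω) :
    s.toJordanDecomposition.negPart ≤ s.totalVariation :=
  Measure.le_add_left le_rfl

lemma part_null {s : SignedMeasure Ω} {N : Set Ω} (h : s.totalVariation N = 0) :
    s.toJordanDecomposition.posPart N = 0 ∧ s.toJordanDecomposition.negPart N = 0 := by
  have h' : s.toJordanDecomposition.posPart N + s.toJordanDecomposition.negPart N = 0 := by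
    rw [← Measure.add_apply]; exact h
  exact add_eq_zero.mp h'

lemma integrable_posPart {s : SignedMeasure Ω} {f : Ω → ℝ}
    (hf : Integrable f s.totalVariation) :
    Integrable f s.toJordanDecomposition.posPart :=
  hf.mono_measure (posPart_le_tv s)

lemma integrable_negPart {s : SignedMeasure Ω} {f : Ω → ℝ}
    (hf : Integrable f s.totalVariation) :
    Integrable f s.toJordanDecomposition.negPart :=
  hf.mono_measure (negPart_le_tv s)

lemma sIntegral_add (s : SignedMeasure Ω) {f g : Ω → ℝ}
    (hf : Integrable f s.totalVariation) (hg : Integrable g s.totalVariation) (A : Set Ω) :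
    sIntegral s (f + g) A = sIntegral s f A + sIntegral s g A := by
  unfold sIntegral
  simp only [Pi.add_apply]
  rw [integral_add ((integrable_posPart hf).restrict) ((integrable_posPart hg).restrict),
    integral_add ((integrable_negPart hf).restrict) ((integrable_negPart hg).restrict)]
  ring

lemma sIntegral_smul (s : SignedMeasure Ω) (c : ℝ) (f : Ω → ℝ) (A : Set Ω) :
    sIntegral s (c • f) A = c * sIntegral s f A := by
  unfold sIntegral
  simp only [Pi.smul_apply, smul_eq_mul]
  rw [integral_const_mul, integral_const_mul]
  ring

lemma abs_sIntegral_le (s : SignedMeasure Ω) {f : Ω → ℝ}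
    (hf : Integrable f s.totalVariation) (A : Set Ω) :
    |sIntegral s f A| ≤ ∫ ω, |f ω| ∂s.totalVariation := by
  have key : ∀ ν : Measure Ω, Integrable f ν →
      |∫ ω in A, f ω ∂ν| ≤ ∫ ω, |f ω| ∂ν := by
    intro ν hi
    calc |∫ ω in A, f ω ∂ν| ≤ ∫ ω in A, |f ω| ∂ν := by
          simpa [Real.norm_eq_abs] using
            norm_integral_le_integral_norm (μ := ν.restrict A) (f := f)
      _ ≤ ∫ ω, |f ω| ∂ν := by
          refine integral_mono_measure Measure.restrict_le_self ?_ hi.abs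
          exact Filter.Eventually.of_forall fun ω => abs_nonneg _
  have h1 := key _ (integrable_posPart hf)
  have h2 := key _ (integrable_negPart hf)
  have h3 : ∫ ω, |f ω| ∂s.totalVariation =
      (∫ ω, |f ω| ∂s.toJordanDecomposition.posPart) +
      (∫ ω, |f ω| ∂s.toJordanDecomposition.negPart) := by
    rw [SignedMeasure.totalVariation,
      integral_add_measure (integrable_posPart hf).abs (integrable_negPart hf).abs]
  unfold sIntegral
  rw [h3]
  have := abs_sub (∫ ω in A, f ω ∂s.toJordanDecomposition.posPart)
    (∫ ω in A, f ω ∂s.toJordanDecomposition.negPart)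
  calc |(∫ ω in A, f ω ∂s.toJordanDecomposition.posPart) -
      ∫ ω in A, f ω ∂s.toJordanDecomposition.negPart| ≤
      |∫ ω in A, f ω ∂s.toJordanDecomposition.posPart| +
      |∫ ω in A, f ω ∂s.toJordanDecomposition.negPart| := abs_sub _ _
    _ ≤ _ := add_le_add h1 h2

/-- On `{ω | 0 ≤ f ω}` minus the negative Hahn piece etc., the integral of `|f|` w.r.t. the
total variation is realized as a difference of two signed integrals. -/
lemma abs_integral_repr (s : SignedMeasure Ω) {f : Ω → ℝ} (hfm : Measurable f)
    (hfi : Integrable f s.totalVariation) :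
    ∃ A B : Set Ω, MeasurableSet A ∧ MeasurableSet B ∧
      sIntegral s f A - sIntegral s f B = ∫ ω, |f ω| ∂s.totalVariation := by
  classical
  obtain ⟨t, htm, hpt, hnt⟩ := s.toJordanDecomposition.mutuallySingular
  set νp := s.toJordanDecomposition.posPart with hνp
  set νn := s.toJordanDecomposition.negPart with hνn
  set P : Set Ω := {ω | 0 ≤ f ω} with hP
  have hPm : MeasurableSet P := measurableSet_le measurable_const hfm
  set A : Set Ω := (P ∩ tᶜ) ∪ (Pᶜ ∩ t) with hA
  set B : Set Ω := (Pᶜ ∩ tᶜ) ∪ (P ∩ t) with hB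
  have hAm : MeasurableSet A := ((hPm.inter htm.compl).union (hPm.compl.inter htm))
  have hBm : MeasurableSet B := ((hPm.compl.inter htm.compl).union (hPm.inter htm))
  -- a.e. identifications
  have hAp : A =ᵐ[νp] P := by
    rw [MeasureTheory.ae_eq_set]
    constructor
    · refine measure_mono_null ?_ hpt
      intro ω hω; rcases hω.1 with h1 | h1
      · exact absurd h1.1 hω.2
      · exact h1.2
    · refine measure_mono_null ?_ hpt
      intro ω hω
      by_contra hωt
      exact hω.2 (Or.inl ⟨hω.1, hωt⟩)
  have hAn : A =ᵐ[νn] (Pᶜ : Set Ω) := by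
    rw [MeasureTheory.ae_eq_set]
    constructor
    · refine measure_mono_null ?_ hnt
      intro ω hω; rcases hω.1 with h1 | h1
      · exact h1.2
      · exact absurd h1.1 hω.2
    · refine measure_mono_null ?_ hnt
      intro ω hω
      by_contra hωt
      exact hω.2 (Or.inr ⟨hω.1, not_not.mp hωt⟩)
  have hBp : B =ᵐ[νp] (Pᶜ : Set Ω) := by
    rw [MeasureTheory.ae_eq_set]
    constructor
    · refine measure_mono_null ?_ hpt
      intro ω hω; rcases hω.1 with h1 | h1
      · exact absurd h1.1 hω.2
      · exact h1.2
    · refine measure_mono_null ?_ hpt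
      intro ω hω
      by_contra hωt
      exact hω.2 (Or.inl ⟨hω.1, hωt⟩)
  have hBn : B =ᵐ[νn] P := by
    rw [MeasureTheory.ae_eq_set]
    constructor
    · refine measure_mono_null ?_ hnt
      intro ω hω; rcases hω.1 with h1 | h1
      · exact h1.2
      · exact absurd h1.1 hω.2
    · refine measure_mono_null ?_ hnt
      intro ω hω
      by_contra hωt
      exact hω.2 (Or.inr ⟨hω.1, not_not.mp hωt⟩)
  -- point: ∫_P f dν - ∫_{Pᶜ} f dν = ∫ |f| dν
  have hsplit : ∀ ν : Measure Ω, Integrable f ν →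
      (∫ ω in P, f ω ∂ν) - ∫ ω in Pᶜ, f ω ∂ν = ∫ ω, |f ω| ∂ν := by
    intro ν hi
    have h1 : ∫ ω in P, |f ω| ∂ν = ∫ ω in P, f ω ∂ν :=
      setIntegral_congr_fun hPm fun ω hω => abs_of_nonneg hω
    have h2 : ∫ ω in Pᶜ, |f ω| ∂ν = ∫ ω in Pᶜ, (-f) ω ∂ν :=
      setIntegral_congr_fun hPm.compl fun ω hω => by
        simp only [Pi.neg_apply]
        exact abs_of_neg (not_le.mp hω)
    have h3 := integral_add_compl hPm hi.abs
    rw [h1, h2] at h3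
    simp only [Pi.neg_apply, integral_neg] at h3
    linarith [h3]
  refine ⟨A, B, hAm, hBm, ?_⟩
  unfold sIntegral
  rw [setIntegral_congr_set hAp, setIntegral_congr_set hAn, setIntegral_congr_set hBp,
    setIntegral_congr_set hBn]
  have hfp := hsplit _ (integrable_posPart hfi)
  have hfn := hsplit _ (integrable_negPart hfi)
  have htv : ∫ ω, |f ω| ∂s.totalVariation =
      (∫ ω, |f ω| ∂νp) + ∫ ω, |f ω| ∂νn := by
    rw [SignedMeasure.totalVariation,
      integral_add_measure (integrable_posPart hfi).abs (integrable_negPart hfi).abs]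
  rw [htv]
  linarith [hfp, hfn]

/-- The vector-valued integral of a simple function over `A`. -/
def simpleVec (m : VectorMeasure Ω X) (ψ : SimpleFunc Ω ℝ) (A : Set Ω) : X :=
  ∑ y ∈ ψ.range, y • m (ψ ⁻¹' {y} ∩ A)

lemma simpleVec_spec (m : VectorMeasure Ω X) (ψ : SimpleFunc Ω ℝ) {A : Set Ω}
    (hA : MeasurableSet A) (x : X →L[ℝ] ℝ)
    (hp : Integrable ψ ((dualApply m x).toJordanDecomposition.posPart.restrict A))
    (hn : Integrable ψ ((dualApply m x).toJordanDecomposition.negPart.restrict A)) :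
    x (simpleVec m ψ A) = sIntegral (dualApply m x) ψ A := by
  classical
  set s := dualApply m x with hs
  have hL : x (simpleVec m ψ A) =
      ∑ y ∈ ψ.range, ((s.toJordanDecomposition.posPart (ψ ⁻¹' {y} ∩ A)).toReal * y -
        (s.toJordanDecomposition.negPart (ψ ⁻¹' {y} ∩ A)).toReal * y) := by
    rw [simpleVec, map_sum]
    refine Finset.sum_congr rfl fun y _ => ?_
    have h1 : x (m (ψ ⁻¹' {y} ∩ A)) =
        (s.toJordanDecomposition.posPart (ψ ⁻¹' {y} ∩ A)).toReal -
        (s.toJordanDecomposition.negPart (ψ ⁻¹' {y} ∩ A)).toReal := by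
      rw [← dualApply_apply m x, ← hs, sm_apply s ((ψ.measurableSet_fiber y).inter hA)]
    rw [ContinuousLinearMap.map_smul, h1, smul_eq_mul]
    ring
  have hR1 : ∫ ω in A, ψ ω ∂s.toJordanDecomposition.posPart =
      ∑ y ∈ ψ.range, (s.toJordanDecomposition.posPart (ψ ⁻¹' {y} ∩ A)).toReal * y := by
    rw [← SimpleFunc.integral_eq_integral ψ hp, SimpleFunc.integral_eq]
    refine Finset.sum_congr rfl fun y _ => ?_
    rw [measureReal_def, Measure.restrict_apply (ψ.measurableSet_fiber y), smul_eq_mul]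
  have hR2 : ∫ ω in A, ψ ω ∂s.toJordanDecomposition.negPart =
      ∑ y ∈ ψ.range, (s.toJordanDecomposition.negPart (ψ ⁻¹' {y} ∩ A)).toReal * y := by
    rw [← SimpleFunc.integral_eq_integral ψ hn, SimpleFunc.integral_eq]
    refine Finset.sum_congr rfl fun y _ => ?_
    rw [measureReal_def, Measure.restrict_apply (ψ.measurableSet_fiber y), smul_eq_mul]
  unfold sIntegral
  rw [hL, hR1, hR2, ← Finset.sum_sub_distrib]

/-- The positive cone in a B.f.s. -/
def posCone (B : BFS S μ X) : Set X := {v | ∀ᵐ s ∂μ, 0 ≤ B.J v s}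

lemma zero_mem_posCone (B : BFS S μ X) : (0 : X) ∈ posCone B := by
  have h0 : B.J 0 = 0 := map_zero B.J
  show ∀ᵐ s ∂μ, 0 ≤ B.J 0 s
  filter_upwards with s
  rw [h0]
  simp

lemma add_mem_posCone (B : BFS S μ X) {v w : X} (hv : v ∈ posCone B) (hw : w ∈ posCone B) :
    v + w ∈ posCone B := by
  show ∀ᵐ s ∂μ, 0 ≤ B.J (v + w) s
  filter_upwards [hv, hw] with s h1 h2
  rw [map_add]
  exact add_nonneg h1 h2

lemma smul_mem_posCone (B : BFS S μ X) {c : ℝ} (hc : 0 ≤ c) {v : X} (hv : v ∈ posCone B) :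
    c • v ∈ posCone B := by
  show ∀ᵐ s ∂μ, 0 ≤ B.J (c • v) s
  filter_upwards [hv] with s h1
  have : B.J (c • v) = c • B.J v := _root_.map_smul B.J c v
  rw [this]
  exact mul_nonneg hc h1

lemma sum_mem_posCone (B : BFS S μ X) {ι : Type*} (t : Finset ι) {f : ι → X}
    (hf : ∀ i ∈ t, f i ∈ posCone B) : (∑ i ∈ t, f i) ∈ posCone B :=
  Finset.sum_induction f (· ∈ posCone B) (fun _ _ ha hb => add_mem_posCone B ha hb)
    (zero_mem_posCone B) hf

lemma convex_posCone (B : BFS S μ X) : Convex ℝ (posCone B) := by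
  intro v hv w hw a b ha hb _
  exact add_mem_posCone B (smul_mem_posCone B ha hv) (smul_mem_posCone B hb hw)

lemma isClosed_posCone (B : BFS S μ X) : IsClosed (posCone B) := by
  refine IsSeqClosed.isClosed ?_
  intro y p hy hyp
  by_contra hp
  obtain ⟨f, hfm, hfe⟩ : ∃ f, Measurable f ∧ B.J p =ᵐ[μ] f :=
    ⟨(B.aemeasurable p).mk _, (B.aemeasurable p).measurable_mk, (B.aemeasurable p).ae_eq_mk⟩
  have hpf : ¬ ∀ᵐ s ∂μ, 0 ≤ f s := by
    intro hc
    exact hp ((hc.and hfe).mono fun s hs => hs.2 ▸ hs.1)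
  have hD : ∃ k : ℕ, μ {s | f s < -(1 / (k + 1))} ≠ 0 := by
    by_contra hc
    push_neg at hc
    have hnull : μ (⋃ k : ℕ, {s | f s < -(1 / (k + 1 : ℝ))}) = 0 :=
      measure_iUnion_null hc
    refine hpf ?_
    rw [ae_iff]
    refine measure_mono_null ?_ hnull
    intro s hs
    simp only [Set.mem_setOf_eq, not_le] at hs
    obtain ⟨k, hk⟩ := exists_nat_one_div_lt (neg_pos.mpr hs)
    refine Set.mem_iUnion.mpr ⟨k, ?_⟩
    simp only [Set.mem_setOf_eq]
    linarith
  obtain ⟨k, hk⟩ := hD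
  set ε : ℝ := 1 / (k + 1) with hε
  have hεpos : 0 < ε := by positivity
  set D : Set S := {s | f s < -ε} with hDdef
  have hDm : MeasurableSet D := measurableSet_lt hfm measurable_const
  set g : S → ℝ := D.indicator fun _ => ε with hg
  have hgm : AEMeasurable g μ := (measurable_const.indicator hDm).aemeasurable
  have hkey : ∀ n, ∀ᵐ s ∂μ, |g s| ≤ |B.J (p - y n) s| := by
    intro n
    filter_upwards [hfe, hy n] with s h1 h2
    have h3 : B.J (p - y n) s = B.J p s - B.J (y n) s := by
      rw [map_sub]; rfl
    by_cases hsD : s ∈ D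
    · have h4 : f s < -ε := hsD
      have h5 : B.J (p - y n) s ≤ -ε := by
        rw [h3, h1]
        linarith
      rw [hg, Set.indicator_of_mem hsD, abs_of_pos hεpos]
      exact le_abs.mpr (Or.inr (by linarith))
    · rw [hg, Set.indicator_of_notMem hsD]
      simp
  choose z hz1 hz2 using fun n => B.ideal (p - y n) g hgm (hkey n)
  have hzz : ∀ n, z n = z 0 := by
    intro n
    have hdiff : B.J (z n - z 0) =ᵐ[μ] 0 := by
      have := (hz1 n).and (hz1 0)
      filter_upwards [this] with s hs
      rw [map_sub]
      show B.J (z n) s - B.J (z 0) s = 0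
      rw [hs.1, hs.2]; ring
    have := B.eq_zero _ hdiff
    exact sub_eq_zero.mp this
  have hnorm0 : Tendsto (fun n => ‖p - y n‖) atTop (𝓝 0) := by
    have := tendsto_iff_norm_sub_tendsto_zero.mp hyp
    refine this.congr fun n => ?_
    rw [norm_sub_rev]
  have hz0 : ‖z 0‖ ≤ 0 := by
    refine ge_of_tendsto hnorm0 (Filter.Eventually.of_forall fun n => ?_)
    calc ‖z 0‖ = ‖z n‖ := by rw [hzz n]
      _ ≤ ‖p - y n‖ := hz2 n
  have hz0' : z 0 = 0 := by
    rw [← norm_eq_zero]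
    exact le_antisymm hz0 (norm_nonneg _)
  have hgnull : g =ᵐ[μ] 0 := by
    have h1 := hz1 0
    rw [hz0'] at h1
    have h2 : B.J (0 : X) = 0 := map_zero B.J
    rw [h2] at h1
    exact h1.symm
  refine hk ?_
  have : μ {s | g s ≠ 0} = 0 := by
    rw [← ae_iff] at *
    filter_upwards [hgnull] with s hs
    simpa using hs
  refine measure_mono_null ?_ this
  intro s hs
  have : g s = ε := Set.indicator_of_mem hs _
  simp only [Set.mem_setOf_eq, this]
  exact ne_of_gt hεpos

lemma norm_mono_of_posCone (B : BFS S μ X) {v w : X} (hv : v ∈ posCone B)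
    (hw : w - v ∈ posCone B) : ‖v‖ ≤ ‖w‖ := by
  have hae : ∀ᵐ s ∂μ, |B.J v s| ≤ |B.J w s| := by
    filter_upwards [hv, hw] with s h1 h2
    have h3 : B.J (w - v) s = B.J w s - B.J v s := by rw [map_sub]; rfl
    rw [h3] at h2
    rw [abs_of_nonneg h1, abs_of_nonneg (by linarith)]
    linarith
  obtain ⟨u, hu1, hu2⟩ := B.ideal w (B.J v) (B.aemeasurable v) hae
  have huv : u = v := by
    have hdiff : B.J (u - v) =ᵐ[μ] 0 := by
      filter_upwards [hu1] with s hs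
      rw [map_sub]
      show B.J u s - B.J v s = 0
      rw [hs]; ring
    exact sub_eq_zero.mp (B.eq_zero _ hdiff)
  rw [← huv]
  exact hu2

lemma mem_posCone_of_weak_limit (B : BFS S μ X) {v : X} {vk : ℕ → X}
    (hk : ∀ k, vk k ∈ posCone B)
    (hconv : ∀ x : X →L[ℝ] ℝ, Tendsto (fun k => x (vk k)) atTop (𝓝 (x v))) :
    v ∈ posCone B := by
  by_contra hv
  obtain ⟨φ, u, hφv, hφC⟩ :=
    geometric_hahn_banach_point_closed (convex_posCone B) (isClosed_posCone B) hv
  have hu0 : u < 0 := by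
    have := hφC 0 (zero_mem_posCone B)
    simpa using this
  have hφpos : ∀ w ∈ posCone B, 0 ≤ φ w := by
    intro w hw
    by_contra hneg
    push_neg at hneg
    have ht : (0:ℝ) < u / φ w := div_pos_of_neg_of_neg hu0 hneg
    have hmem : (u / φ w) • w ∈ posCone B := smul_mem_posCone B ht.le hw
    have := hφC _ hmem
    rw [ContinuousLinearMap.map_smul, smul_eq_mul, div_mul_cancel₀ _ (ne_of_lt hneg)] at this
    exact lt_irrefl u this
  have hlim : 0 ≤ φ v :=
    ge_of_tendsto (hconv φ) (Filter.Eventually.of_forall fun k => hφpos _ (hk k))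
  linarith

lemma semivar_empty (m : VectorMeasure Ω X) : semivar m (∅ : Set Ω) = 0 := by
  unfold semivar
  refine ENNReal.iSup_eq_zero.mpr fun x => measure_empty

lemma semivar_null_iUnion {ι : Type*} [Countable ι] (m : VectorMeasure Ω X) {N : ι → Set Ω}
    (h0 : ∀ i, semivar m (N i) = 0) : semivar m (⋃ i, N i) = 0 := by
  unfold semivar at *
  refine ENNReal.iSup_eq_zero.mpr fun x => ?_
  refine le_antisymm (le_trans (measure_iUnion_le N) ?_) zero_le
  have : ∀ i, (dualApply m x.1).totalVariation (N i) = 0 := fun i =>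
    ENNReal.iSup_eq_zero.mp (h0 i) x
  simp [this]

lemma tv_null_of_semivar_null [CompleteSpace X] (m : VectorMeasure Ω X) {N : Set Ω}
    (hN : MeasurableSet N) (h0 : semivar m N = 0) (x : X →L[ℝ] ℝ) :
    (dualApply m x).totalVariation N = 0 := by
  unfold semivar at h0
  have hunit : ∀ y : X →L[ℝ] ℝ, ‖y‖ ≤ 1 → (dualApply m y).totalVariation N = 0 := by
    intro y hy
    exact ENNReal.iSup_eq_zero.mp h0 ⟨y, hy⟩
  have hm0 : ∀ C : Set Ω, MeasurableSet C → C ⊆ N → m C = 0 := by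
    intro C hC hCN
    refine NormedSpace.eq_zero_of_forall_dual_eq_zero ℝ fun ψ => ?_
    rcases eq_or_ne ψ 0 with rfl | hψ
    · simp
    · have hyn : ‖(‖ψ‖⁻¹ • ψ : X →L[ℝ] ℝ)‖ ≤ 1 := by
        rw [norm_smul, norm_inv, norm_norm]
        exact le_of_eq (inv_mul_cancel₀ (norm_ne_zero_iff.mpr hψ))
      have h1 : (dualApply m (‖ψ‖⁻¹ • ψ)).totalVariation C = 0 :=
        measure_mono_null hCN (hunit _ hyn)
      have h2 : (dualApply m (‖ψ‖⁻¹ • ψ)) C = 0 :=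
        SignedMeasure.null_of_totalVariation_zero _ h1
      rw [dualApply_apply] at h2
      have h3 : (‖ψ‖⁻¹ • ψ) (m C) = ‖ψ‖⁻¹ * ψ (m C) := rfl
      rw [h3] at h2
      have h4 : (‖ψ‖:ℝ)⁻¹ ≠ 0 := inv_ne_zero (norm_ne_zero_iff.mpr hψ)
      exact (mul_eq_zero.mp h2).resolve_left h4
  -- now show total variation of x vanishes on N
  set s := dualApply m x with hs
  obtain ⟨t, htm, hpt, hnt⟩ := s.toJordanDecomposition.mutuallySingular
  have hsub : ∀ C : Set Ω, MeasurableSet C → C ⊆ N → s C = 0 := by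
    intro C hC hCN
    rw [hs, dualApply_apply, hm0 C hC hCN, map_zero]
  have hp : s.toJordanDecomposition.posPart N = 0 := by
    have hsplit : s.toJordanDecomposition.posPart (N ∩ t) +
        s.toJordanDecomposition.posPart (N \ t) = s.toJordanDecomposition.posPart N :=
      measure_inter_add_diff N htm
    have h1 : s.toJordanDecomposition.posPart (N ∩ t) = 0 :=
      measure_mono_null Set.inter_subset_right hpt
    have h2 : s.toJordanDecomposition.posPart (N \ t) = 0 := by
      have hBm : MeasurableSet (N \ t) := hN.diff htm
      have hBn : s.toJordanDecomposition.negPart (N \ t) = 0 :=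
        measure_mono_null (fun ω hω => hω.2) hnt
      have hB0 : s (N \ t) = 0 := hsub _ hBm Set.diff_subset
      rw [sm_apply s hBm, hBn] at hB0
      simp only [ENNReal.toReal_zero, sub_zero] at hB0
      exact (ENNReal.toReal_eq_zero_iff _).mp hB0 |>.resolve_right (measure_ne_top _ _)
    rw [← hsplit, h1, h2, add_zero]
  have hn : s.toJordanDecomposition.negPart N = 0 := by
    have hsplit : s.toJordanDecomposition.negPart (N ∩ t) +
        s.toJordanDecomposition.negPart (N \ t) = s.toJordanDecomposition.negPart N :=
      measure_inter_add_diff N htm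
    have h1 : s.toJordanDecomposition.negPart (N \ t) = 0 :=
      measure_mono_null (fun ω hω => hω.2) hnt
    have h2 : s.toJordanDecomposition.negPart (N ∩ t) = 0 := by
      have hBm : MeasurableSet (N ∩ t) := hN.inter htm
      have hBp : s.toJordanDecomposition.posPart (N ∩ t) = 0 :=
        measure_mono_null Set.inter_subset_right hpt
      have hB0 : s (N ∩ t) = 0 := hsub _ hBm Set.inter_subset_left
      rw [sm_apply s hBm, hBp] at hB0
      simp only [ENNReal.toReal_zero, zero_sub, neg_eq_zero] at hB0
      exact (ENNReal.toReal_eq_zero_iff _).mp hB0 |>.resolve_right (measure_ne_top _ _)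
    rw [← hsplit, h1, h2, add_zero]
  show (s.toJordanDecomposition.posPart + s.toJordanDecomposition.negPart) N = 0
  rw [Measure.add_apply, hp, hn, add_zero]

lemma mIntegral_spec (m : VectorMeasure Ω X) {f : Ω → ℝ} (hf : MIntegrable m f)
    {A : Set Ω} (hA : MeasurableSet A) (x : X →L[ℝ] ℝ) :
    x (mIntegral m f A) = sIntegral (dualApply m x) f A := by
  obtain h := hf.2.2 A hA
  rw [mIntegral, dif_pos h]
  exact h.choose_spec x

lemma MIntegrable.zero' (m : VectorMeasure Ω X) : MIntegrable m (0 : Ω → ℝ) := by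
  refine ⟨measurable_const, fun x => ?_, fun A hA => ⟨0, fun x => ?_⟩⟩
  · exact integrable_zero _ _ _
  · unfold sIntegral
    simp

lemma MIntegrable.add' {m : VectorMeasure Ω X} {f g : Ω → ℝ} (hf : MIntegrable m f)
    (hg : MIntegrable m g) : MIntegrable m (f + g) := by
  obtain ⟨hfm, hfi, hfv⟩ := hf
  obtain ⟨hgm, hgi, hgv⟩ := hg
  refine ⟨hfm.add hgm, fun x => ?_, fun A hA => ?_⟩
  · have := (hfi x).add (hgi x)
    exact this
  · obtain ⟨vf, hvf⟩ := hfv A hA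
    obtain ⟨vg, hvg⟩ := hgv A hA
    exact ⟨vf + vg, fun x => by
      rw [map_add, hvf x, hvg x, sIntegral_add _ (hfi x) (hgi x)]⟩

lemma MIntegrable.smul' {m : VectorMeasure Ω X} (c : ℝ) {f : Ω → ℝ} (hf : MIntegrable m f) :
    MIntegrable m (c • f) := by
  obtain ⟨hfm, hfi, hfv⟩ := hf
  refine ⟨hfm.const_smul c, fun x => ?_, fun A hA => ?_⟩
  · have := (hfi x).smul c
    exact this
  · obtain ⟨vf, hvf⟩ := hfv A hA
    exact ⟨c • vf, fun x => by
      rw [ContinuousLinearMap.map_smul, hvf x, sIntegral_smul, smul_eq_mul]⟩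

lemma MIntegrable.finsetSum' {m : VectorMeasure Ω X} {f : ℕ → Ω → ℝ} (t : Finset ℕ)
    (hf : ∀ i ∈ t, MIntegrable m (f i)) : MIntegrable m (∑ i ∈ t, f i) := by
  classical
  induction t using Finset.induction_on with
  | empty => simpa using MIntegrable.zero' m
  | insert _ _ hnotmem ih =>
    rw [Finset.sum_insert hnotmem]
    exact MIntegrable.add' (hf _ (Finset.mem_insert_self _ _))
      (ih fun i hi => hf i (Finset.mem_insert_of_mem hi))

lemma bddAbove_integrals [CompleteSpace X] (m : VectorMeasure Ω X) {f : Ω → ℝ}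
    (hf : MIntegrable m f) :
    BddAbove (Set.range fun x : {x : X →L[ℝ] ℝ // ‖x‖ ≤ 1} =>
      ∫ ω, |f ω| ∂(dualApply m x.1).totalVariation) := by
  classical
  set ι := {p : Set Ω × Set Ω // MeasurableSet p.1 ∧ MeasurableSet p.2} with hι
  set g : ι → StrongDual ℝ (StrongDual ℝ X) := fun p =>
    NormedSpace.inclusionInDoubleDual ℝ X (mIntegral m f p.1.1 - mIntegral m f p.1.2) with hgdef
  have happly : ∀ (p : ι) (x : X →L[ℝ] ℝ), g p x =
      sIntegral (dualApply m x) f p.1.1 - sIntegral (dualApply m x) f p.1.2 := by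
    intro p x
    have h0 : g p x = x (mIntegral m f p.1.1 - mIntegral m f p.1.2) := rfl
    rw [h0, map_sub, mIntegral_spec m hf p.2.1 x, mIntegral_spec m hf p.2.2 x]
  have hbound : ∀ x : StrongDual ℝ X, ∃ C, ∀ p : ι, ‖g p x‖ ≤ C := by
    intro x
    refine ⟨2 * ∫ ω, |f ω| ∂(dualApply m x).totalVariation, fun p => ?_⟩
    rw [happly p x, Real.norm_eq_abs]
    calc |sIntegral (dualApply m x) f p.1.1 - sIntegral (dualApply m x) f p.1.2| ≤
        |sIntegral (dualApply m x) f p.1.1| + |sIntegral (dualApply m x) f p.1.2| := abs_sub _ _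
      _ ≤ _ := by
          have h1 := abs_sIntegral_le (dualApply m x) (hf.2.1 x) p.1.1
          have h2 := abs_sIntegral_le (dualApply m x) (hf.2.1 x) p.1.2
          linarith
  obtain ⟨C', hC'⟩ := banach_steinhaus hbound
  refine ⟨C', ?_⟩
  rintro r ⟨x, rfl⟩
  show (∫ ω, |f ω| ∂(dualApply m x.1).totalVariation) ≤ C'
  obtain ⟨A, Bs, hA, hBs, hrepr⟩ := abs_integral_repr (dualApply m x.1) hf.1 (hf.2.1 x.1)
  rw [← hrepr, ← happly ⟨(A, Bs), hA, hBs⟩ x.1]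
  calc g ⟨(A, Bs), hA, hBs⟩ x.1 ≤ ‖g ⟨(A, Bs), hA, hBs⟩ x.1‖ := le_abs_self _
    _ ≤ ‖g ⟨(A, Bs), hA, hBs⟩‖ * ‖x.1‖ := (g _).le_opNorm _
    _ ≤ C' * 1 := by
        have h0 : (0:ℝ) ≤ C' := le_trans (norm_nonneg (g ⟨(A, Bs), hA, hBs⟩)) (hC' _)
        exact mul_le_mul (hC' _) x.2 (norm_nonneg _) h0
    _ = C' := mul_one C'

lemma integral_tv_le [CompleteSpace X] (m : VectorMeasure Ω X) {f : Ω → ℝ}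
    (hf : MIntegrable m f) (x : X →L[ℝ] ℝ) :
    ∫ ω, |f ω| ∂(dualApply m x).totalVariation ≤ (‖x‖ + 1) * mNorm m f := by
  have hc : (0:ℝ) < ‖x‖ + 1 := by positivity
  set c : ℝ := ‖x‖ + 1 with hcdef
  set y : X →L[ℝ] ℝ := c⁻¹ • x with hydef
  have hy : ‖y‖ ≤ 1 := by
    refine le_trans (norm_smul_le c⁻¹ x) ?_
    rw [Real.norm_eq_abs, abs_of_pos (inv_pos.mpr hc)]
    rw [inv_mul_le_iff₀ hc, mul_one, hcdef]
    linarith [norm_nonneg x]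
  have hxy : x = c • y := by
    rw [hydef, smul_smul, mul_inv_cancel₀ hc.ne', one_smul]
  have hda : dualApply m x = c • dualApply m y := by
    refine VectorMeasure.ext fun A hA => ?_
    rw [VectorMeasure.smul_apply, dualApply_apply, dualApply_apply, hxy]
    rfl
  have htv : (dualApply m x).totalVariation =
      (c.toNNReal : ℝ≥0∞) • (dualApply m y).totalVariation := by
    rw [hda]
    unfold SignedMeasure.totalVariation
    rw [SignedMeasure.toJordanDecomposition_smul_real,
      JordanDecomposition.real_smul_posPart_nonneg _ _ hc.le,
      JordanDecomposition.real_smul_negPart_nonneg _ _ hc.le, ← smul_add]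
    rfl
  rw [htv, integral_smul_measure]
  have htoReal : (c.toNNReal : ℝ≥0∞).toReal = c := by
    simp [Real.coe_toNNReal c hc.le]
  rw [htoReal, smul_eq_mul]
  refine mul_le_mul_of_nonneg_left ?_ hc.le
  exact le_ciSup (bddAbove_integrals m hf) (⟨y, hy⟩ : {x : X →L[ℝ] ℝ // ‖x‖ ≤ 1})

lemma isBddLinFunctional_pair [CompleteSpace X] (m : VectorMeasure Ω X) {E F : Set Ω}
    (x : X →L[ℝ] ℝ) :
    IsBddLinFunctional (MIntegrable m) (mNorm m)
      (fun f => sIntegral (dualApply m x) f E - sIntegral (dualApply m x) f F) := by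
  refine ⟨fun f g hf hg => ?_, fun c f _ => ?_, ⟨2 * (‖x‖ + 1), fun f hf => ?_⟩⟩
  · show sIntegral (dualApply m x) (f + g) E - sIntegral (dualApply m x) (f + g) F =
      (sIntegral (dualApply m x) f E - sIntegral (dualApply m x) f F) +
      (sIntegral (dualApply m x) g E - sIntegral (dualApply m x) g F)
    rw [sIntegral_add _ (hf.2.1 x) (hg.2.1 x), sIntegral_add _ (hf.2.1 x) (hg.2.1 x)]
    ring
  · show sIntegral (dualApply m x) (c • f) E - sIntegral (dualApply m x) (c • f) F =
      c * (sIntegral (dualApply m x) f E - sIntegral (dualApply m x) f F)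
    rw [sIntegral_smul, sIntegral_smul]
    ring
  · show |sIntegral (dualApply m x) f E - sIntegral (dualApply m x) f F| ≤
      2 * (‖x‖ + 1) * mNorm m f
    have h1 := abs_sIntegral_le (dualApply m x) (hf.2.1 x) E
    have h2 := abs_sIntegral_le (dualApply m x) (hf.2.1 x) F
    have h3 := integral_tv_le m hf x
    calc |sIntegral (dualApply m x) f E - sIntegral (dualApply m x) f F| ≤
        |sIntegral (dualApply m x) f E| + |sIntegral (dualApply m x) f F| := abs_sub _ _
      _ ≤ 2 * ((‖x‖ + 1) * mNorm m f) := by linarith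
      _ = 2 * (‖x‖ + 1) * mNorm m f := by ring

lemma mem_posCone_integral [CompleteSpace X] (B : BFS S μ X) (m : VectorMeasure Ω X)
    (hpos : ∀ A : Set Ω, MeasurableSet A → ∀ᵐ s ∂μ, 0 ≤ B.J (m A) s)
    {u : Ω → ℝ} (hum : Measurable u) (hu0 : ∀ ω, 0 ≤ u ω)
    (hui : ∀ x : X →L[ℝ] ℝ, Integrable u (dualApply m x).totalVariation)
    {A : Set Ω} (hA : MeasurableSet A) {v : X}
    (hv : ∀ x : X →L[ℝ] ℝ, x v = sIntegral (dualApply m x) u A) :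
    v ∈ posCone B := by
  classical
  set g : Ω → ℝ≥0∞ := fun ω => ENNReal.ofReal (u ω) with hgdef
  have hgm : Measurable g := hum.ennreal_ofReal
  set ψ : ℕ → SimpleFunc Ω ℝ := fun k => (SimpleFunc.eapprox g k).map ENNReal.toReal with hψdef
  have hψ_apply : ∀ k ω, ψ k ω = (SimpleFunc.eapprox g k ω).toReal := fun k ω => rfl
  have hψ_le : ∀ k ω, 0 ≤ ψ k ω ∧ ψ k ω ≤ u ω := by
    intro k ω
    have h1 : SimpleFunc.eapprox g k ω ≤ g ω := by
      rw [← SimpleFunc.iSup_eapprox_apply hgm]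
      exact le_iSup (fun n => SimpleFunc.eapprox g n ω) k
    constructor
    · rw [hψ_apply]; exact ENNReal.toReal_nonneg
    · rw [hψ_apply]
      have h2 := ENNReal.toReal_mono (by simp [hgdef] : g ω ≠ ⊤) h1
      rwa [hgdef, ENNReal.toReal_ofReal (hu0 ω)] at h2
  have hψ_tend : ∀ ω, Tendsto (fun k => ψ k ω) atTop (𝓝 (u ω)) := by
    intro ω
    have h1 : Tendsto (fun k => SimpleFunc.eapprox g k ω) atTop (𝓝 (g ω)) := by
      rw [← SimpleFunc.iSup_eapprox_apply hgm]
      exact tendsto_atTop_iSup fun i j hij => SimpleFunc.monotone_eapprox g hij ω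
    have h2 := (ENNReal.tendsto_toReal (by simp [hgdef] : g ω ≠ ⊤)).comp h1
    have h3 : (g ω).toReal = u ω := by rw [hgdef]; exact ENNReal.toReal_ofReal (hu0 ω)
    rw [h3] at h2
    exact h2
  have hcone : ∀ k, simpleVec m (ψ k) A ∈ posCone B := by
    intro k
    refine sum_mem_posCone B _ fun y hy => ?_
    have hy0 : 0 ≤ y := by
      obtain ⟨ω, hω⟩ := SimpleFunc.mem_range.mp hy
      rw [← hω]
      exact (hψ_le k ω).1
    exact smul_mem_posCone B hy0 (hpos _ (((ψ k).measurableSet_fiber y).inter hA))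
  have hint : ∀ (x : X →L[ℝ] ℝ) (ν : Measure Ω), ν ≤ (dualApply m x).totalVariation →
      Integrable u (ν.restrict A) :=
    fun x ν hle => ((hui x).mono_measure hle).restrict
  have hψint : ∀ (k) (x : X →L[ℝ] ℝ) (ν : Measure Ω), ν ≤ (dualApply m x).totalVariation →
      Integrable (ψ k) (ν.restrict A) := by
    intro k x ν hle
    refine (hint x ν hle).mono (ψ k).aestronglyMeasurable
      (Filter.Eventually.of_forall fun ω => ?_)
    rw [Real.norm_eq_abs, Real.norm_eq_abs, abs_of_nonneg (hψ_le k ω).1,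
      abs_of_nonneg (hu0 ω)]
    exact (hψ_le k ω).2
  have hdom : ∀ (x : X →L[ℝ] ℝ) (ν : Measure Ω), ν ≤ (dualApply m x).totalVariation →
      Tendsto (fun k => ∫ ω in A, (ψ k) ω ∂ν) atTop (𝓝 (∫ ω in A, u ω ∂ν)) := by
    intro x ν hle
    refine tendsto_integral_of_dominated_convergence u
      (fun k => (ψ k).aestronglyMeasurable) (hint x ν hle)
      (fun k => Filter.Eventually.of_forall fun ω => ?_)
      (Filter.Eventually.of_forall fun ω => hψ_tend ω)
    rw [Real.norm_eq_abs, abs_of_nonneg (hψ_le k ω).1]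
    exact (hψ_le k ω).2
  have hconv : ∀ x : X →L[ℝ] ℝ, Tendsto (fun k => x (simpleVec m (ψ k) A)) atTop (𝓝 (x v)) := by
    intro x
    have hrw : ∀ k, x (simpleVec m (ψ k) A) = sIntegral (dualApply m x) (ψ k) A := fun k =>
      simpleVec_spec m (ψ k) hA x (hψint k x _ (posPart_le_tv _)) (hψint k x _ (negPart_le_tv _))
    simp only [hrw, hv]
    unfold sIntegral
    exact (hdom x _ (posPart_le_tv _)).sub (hdom x _ (negPart_le_tv _))
  exact mem_posCone_of_weak_limit B hcone hconv

end AuxStatement10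


/-- if `X` has the weak Banach-Saks property, `m` is positive and
`{hₙ} ⊆ L¹(m)` is weakly null with pairwise disjoint supports, then some subsequence has
arithmetic means converging to `0` in the norm of `L¹(m)`. -/
theorem statement10
    {S : Type*} [MeasurableSpace S] {μ : Measure S} [IsFiniteMeasure μ]
    {X : Type*} [NormedAddCommGroup X] [NormedSpace ℝ X] [CompleteSpace X]
    (B : BFS S μ X) (hWBS : WeakBanachSaks X)
    {Ω : Type*} [MeasurableSpace Ω] (m : VectorMeasure Ω X)
    (hpos : ∀ A : Set Ω, MeasurableSet A → ∀ᵐ s ∂μ, 0 ≤ B.J (m A) s)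
    (h : ℕ → Ω → ℝ) (hh : ∀ n, MIntegrable m (h n))
    (hwn : WeaklyNullSeq (MIntegrable m) (mNorm m) h)
    (hdisj : ∀ i j, i ≠ j → MAE m (fun ω => h i ω * h j ω = 0)) :
    ∃ σ : ℕ → ℕ, StrictMono σ ∧
      Tendsto (fun n : ℕ => mNorm m ((n : ℝ)⁻¹ • ∑ k ∈ Finset.range n, h (σ k)))
        atTop (nhds 0) := by
  classical
  have hd : ∀ p : ℕ × ℕ, ∃ Np : Set Ω, MeasurableSet Np ∧ semivar m Np = 0 ∧
      (p.1 ≠ p.2 → ∀ ω, ω ∉ Np → h p.1 ω * h p.2 ω = 0) := by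
    intro p
    by_cases hp : p.1 = p.2
    · exact ⟨∅, MeasurableSet.empty, semivar_empty m, fun hne => absurd hp hne⟩
    · obtain ⟨Np, h1, h2, h3⟩ := hdisj p.1 p.2 hp
      exact ⟨Np, h1, h2, fun _ ω hω => h3 ω hω⟩
  choose Ns hNs1 hNs2 hNs3 using hd
  set N : Set Ω := ⋃ p : ℕ × ℕ, Ns p with hNdef
  have hNm : MeasurableSet N := MeasurableSet.iUnion hNs1
  have hN0 : semivar m N = 0 := semivar_null_iUnion m hNs2
  have hNd : ∀ ω, ω ∉ N → ∀ i j, i ≠ j → h i ω * h j ω = 0 := by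
    intro ω hω i j hij
    refine hNs3 (i, j) hij ω fun hmem => hω ?_
    exact Set.mem_iUnion.mpr ⟨(i, j), hmem⟩
  have htvN : ∀ x : X →L[ℝ] ℝ, (dualApply m x).totalVariation N = 0 := fun x =>
    tv_null_of_semivar_null m hNm hN0 x
  have hpN : ∀ x : X →L[ℝ] ℝ, (dualApply m x).toJordanDecomposition.posPart N = 0 :=
    fun x => (part_null (htvN x)).1
  have hnN : ∀ x : X →L[ℝ] ℝ, (dualApply m x).toJordanDecomposition.negPart N = 0 :=
    fun x => (part_null (htvN x)).2
  set E : Set Ω := (⋃ n, {ω | 0 < h n ω}) \ N with hEdef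
  set F : Set Ω := (⋃ n, {ω | h n ω < 0}) \ N with hFdef
  have hEm : MeasurableSet E :=
    (MeasurableSet.iUnion fun n => measurableSet_lt measurable_const (hh n).1).diff hNm
  have hFm : MeasurableSet F :=
    (MeasurableSet.iUnion fun n => measurableSet_lt (hh n).1 measurable_const).diff hNm
  have hkey : ∀ ω, ω ∉ N → ∀ k, E.indicator (h k) ω - F.indicator (h k) ω = |h k ω| := by
    intro ω hω k
    rcases lt_trichotomy (h k ω) 0 with hlt | heq | hgt
    · have hωF : ω ∈ F := ⟨Set.mem_iUnion.mpr ⟨k, hlt⟩, hω⟩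
      have hωE : ω ∉ E := by
        rintro ⟨hmem, -⟩
        obtain ⟨n, hn⟩ := Set.mem_iUnion.mp hmem
        have hn' : 0 < h n ω := hn
        have hnk : n ≠ k := fun hc => by rw [hc] at hn'; linarith
        have hprod := hNd ω hω n k hnk
        exact absurd hprod (mul_ne_zero (ne_of_gt hn') (ne_of_lt hlt))
      rw [Set.indicator_of_notMem hωE, Set.indicator_of_mem hωF, abs_of_neg hlt]
      ring
    · simp [Set.indicator_apply, heq]
    · have hωE : ω ∈ E := ⟨Set.mem_iUnion.mpr ⟨k, hgt⟩, hω⟩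
      have hωF : ω ∉ F := by
        rintro ⟨hmem, -⟩
        obtain ⟨n, hn⟩ := Set.mem_iUnion.mp hmem
        have hn' : h n ω < 0 := hn
        have hnk : n ≠ k := fun hc => by rw [hc] at hn'; linarith
        have hprod := hNd ω hω n k hnk
        exact absurd hprod (mul_ne_zero (ne_of_lt hn') (ne_of_gt hgt))
      rw [Set.indicator_of_mem hωE, Set.indicator_of_notMem hωF, abs_of_pos hgt]
      ring
  have hpart : ∀ (k : ℕ) (ν : Measure Ω), ν N = 0 → Integrable (h k) ν →
      (∫ ω in E, h k ω ∂ν) - ∫ ω in F, h k ω ∂ν = ∫ ω, |h k ω| ∂ν := by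
    intro k ν hν hint
    rw [← integral_indicator hEm, ← integral_indicator hFm,
      ← integral_sub (hint.indicator hEm) (hint.indicator hFm)]
    refine integral_congr_ae ?_
    have hae : ∀ᵐ ω ∂ν, ω ∉ N := by
      rw [ae_iff]
      refine measure_mono_null (fun ω hω => ?_) hν
      simpa using hω
    filter_upwards [hae] with ω hω
    exact hkey ω hω k
  set xk : ℕ → X := fun k => mIntegral m (h k) E - mIntegral m (h k) F with hxkdef
  have habs_int : ∀ (k : ℕ) (x : X →L[ℝ] ℝ),
      Integrable (fun ω => |h k ω|) (dualApply m x).totalVariation := fun k x =>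
    ((hh k).2.1 x).abs
  have hxk : ∀ (x : X →L[ℝ] ℝ) (k : ℕ), x (xk k) =
      sIntegral (dualApply m x) (fun ω => |h k ω|) Set.univ := by
    intro x k
    have h1 : x (xk k) = sIntegral (dualApply m x) (h k) E -
        sIntegral (dualApply m x) (h k) F := by
      show x (mIntegral m (h k) E - mIntegral m (h k) F) = _
      rw [map_sub, mIntegral_spec m (hh k) hEm x, mIntegral_spec m (hh k) hFm x]
    rw [h1]
    unfold sIntegral
    simp only [Measure.restrict_univ]
    have hp := hpart k _ (hpN x) (integrable_posPart ((hh k).2.1 x))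
    have hn := hpart k _ (hnN x) (integrable_negPart ((hh k).2.1 x))
    linarith [hp, hn]
  have hweak : ∀ φ : X →L[ℝ] ℝ, Tendsto (fun k => φ (xk k)) atTop (𝓝 0) := by
    intro φ
    have hT := hwn _ (isBddLinFunctional_pair m (E := E) (F := F) φ)
    refine hT.congr fun k => ?_
    show sIntegral (dualApply m φ) (h k) E - sIntegral (dualApply m φ) (h k) F = φ (xk k)
    have h1 : φ (xk k) = sIntegral (dualApply m φ) (h k) E -
        sIntegral (dualApply m φ) (h k) F := by
      show φ (mIntegral m (h k) E - mIntegral m (h k) F) = _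
      rw [map_sub, mIntegral_spec m (hh k) hEm φ, mIntegral_spec m (hh k) hFm φ]
    rw [h1]
  obtain ⟨σ, hσ, hmean⟩ := hWBS xk hweak
  refine ⟨σ, hσ, ?_⟩
  have key : ∀ n : ℕ, mNorm m ((n : ℝ)⁻¹ • ∑ k ∈ Finset.range n, h (σ k)) ≤
      2 * ‖(n : ℝ)⁻¹ • ∑ k ∈ Finset.range n, xk (σ k)‖ := by
    intro n
    set gn : Ω → ℝ := (n : ℝ)⁻¹ • ∑ k ∈ Finset.range n, h (σ k) with hgndef
    set w : X := (n : ℝ)⁻¹ • ∑ k ∈ Finset.range n, xk (σ k) with hwdef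
    have hgnInt : MIntegrable m gn :=
      MIntegrable.smul' _ (MIntegrable.finsetSum' _ fun k _ => hh (σ k))
    have hgnm : Measurable gn := hgnInt.1
    set u : Ω → ℝ := fun ω => |gn ω| with hudef
    have hum : Measurable u := hgnm.abs
    have hu0 : ∀ ω, 0 ≤ u ω := fun ω => abs_nonneg _
    have hui : ∀ x : X →L[ℝ] ℝ, Integrable u (dualApply m x).totalVariation :=
      fun x => (hgnInt.2.1 x).abs
    set E' : Set Ω := {ω | 0 < gn ω} with hE'def
    set F' : Set Ω := {ω | gn ω < 0} with hF'def
    have hE'm : MeasurableSet E' := measurableSet_lt measurable_const hgnm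
    have hF'm : MeasurableSet F' := measurableSet_lt hgnm measurable_const
    have hptw : ∀ ω, E'.indicator gn ω - F'.indicator gn ω = u ω := by
      intro ω
      rcases lt_trichotomy (gn ω) 0 with hlt | heq | hgt
      · have h1 : ω ∉ E' := by
          simp only [hE'def, Set.mem_setOf_eq, not_lt]
          exact hlt.le
        have h2 : ω ∈ F' := hlt
        rw [Set.indicator_of_notMem h1, Set.indicator_of_mem h2]
        show 0 - gn ω = |gn ω|
        rw [abs_of_neg hlt]; ring
      · simp [Set.indicator_apply, heq, hudef]
      · have h1 : ω ∈ E' := hgt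
        have h2 : ω ∉ F' := by
          simp only [hF'def, Set.mem_setOf_eq, not_lt]
          exact hgt.le
        rw [Set.indicator_of_mem h1, Set.indicator_of_notMem h2]
        show gn ω - 0 = |gn ω|
        rw [abs_of_pos hgt]; ring
    set vA : Set Ω → X := fun A => mIntegral m gn (A ∩ E') - mIntegral m gn (A ∩ F') with hvAdef
    have hvA : ∀ A : Set Ω, MeasurableSet A → ∀ x : X →L[ℝ] ℝ,
        x (vA A) = sIntegral (dualApply m x) u A := by
      intro A hA x
      have h1 : x (vA A) = sIntegral (dualApply m x) gn (A ∩ E') -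
          sIntegral (dualApply m x) gn (A ∩ F') := by
        show x (mIntegral m gn (A ∩ E') - mIntegral m gn (A ∩ F')) = _
        rw [map_sub, mIntegral_spec m hgnInt (hA.inter hE'm) x,
          mIntegral_spec m hgnInt (hA.inter hF'm) x]
      rw [h1]
      unfold sIntegral
      have hpart' : ∀ ν : Measure Ω, Integrable gn ν →
          (∫ ω in A ∩ E', gn ω ∂ν) - ∫ ω in A ∩ F', gn ω ∂ν = ∫ ω in A, u ω ∂ν := by
        intro ν hint
        rw [← setIntegral_indicator hE'm, ← setIntegral_indicator hF'm,
          ← integral_sub ((hint.indicator hE'm).restrict) ((hint.indicator hF'm).restrict)]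
        exact integral_congr_ae (Filter.Eventually.of_forall fun ω => hptw ω)
      have hp := hpart' _ (integrable_posPart (hgnInt.2.1 x))
      have hn' := hpart' _ (integrable_negPart (hgnInt.2.1 x))
      linarith [hp, hn']
    have hcone : ∀ A : Set Ω, MeasurableSet A → vA A ∈ posCone B := fun A hA =>
      mem_posCone_integral B m hpos hum hu0 hui hA (hvA A hA)
    have hdisj_abs : ∀ ω, ω ∉ N → |∑ k ∈ Finset.range n, h (σ k) ω| =
        ∑ k ∈ Finset.range n, |h (σ k) ω| := by
      intro ω hω
      by_cases hz : ∀ k ∈ Finset.range n, h (σ k) ω = 0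
      · rw [Finset.sum_eq_zero hz, Finset.sum_eq_zero fun k hk => by rw [hz k hk, abs_zero],
          abs_zero]
      · push_neg at hz
        obtain ⟨k0, hk0, hk0ne⟩ := hz
        have hothers : ∀ k ∈ Finset.range n, k ≠ k0 → h (σ k) ω = 0 := by
          intro k hk hkne
          have hprod := hNd ω hω (σ k) (σ k0) fun hc => hkne (hσ.injective hc)
          exact (mul_eq_zero.mp hprod).resolve_right hk0ne
        rw [Finset.sum_eq_single_of_mem k0 hk0 hothers,
          Finset.sum_eq_single_of_mem k0 hk0 fun k hk hkne => by
            rw [hothers k hk hkne, abs_zero]]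
    have hwx : ∀ x : X →L[ℝ] ℝ, x w = sIntegral (dualApply m x) u Set.univ := by
      intro x
      have h1 : x w = (n : ℝ)⁻¹ * ∑ k ∈ Finset.range n, x (xk (σ k)) := by
        show x ((n : ℝ)⁻¹ • ∑ k ∈ Finset.range n, xk (σ k)) = _
        rw [ContinuousLinearMap.map_smul, map_sum, smul_eq_mul]
      have h2 : ∀ ν : Measure Ω, ν N = 0 → (∀ k : ℕ, Integrable (fun ω => |h k ω|) ν) →
          (n : ℝ)⁻¹ * ∑ k ∈ Finset.range n, (∫ ω, |h (σ k) ω| ∂ν) = ∫ ω, u ω ∂ν := by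
        intro ν hν hik
        have hae : ∀ᵐ ω ∂ν, ω ∉ N := by
          rw [ae_iff]
          refine measure_mono_null (fun ω hω => ?_) hν
          simpa using hω
        have hcongr : ∫ ω, u ω ∂ν =
            ∫ ω, ((n : ℝ)⁻¹ * ∑ k ∈ Finset.range n, |h (σ k) ω|) ∂ν := by
          refine integral_congr_ae ?_
          filter_upwards [hae] with ω hω
          show |gn ω| = _
          have hval : gn ω = (n : ℝ)⁻¹ * ∑ k ∈ Finset.range n, h (σ k) ω := by
            show ((n : ℝ)⁻¹ • ∑ k ∈ Finset.range n, h (σ k)) ω = _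
            simp [Finset.sum_apply]
          rw [hval, abs_mul, abs_of_nonneg (by positivity : (0:ℝ) ≤ (n : ℝ)⁻¹),
            hdisj_abs ω hω]
        rw [hcongr, integral_const_mul]
        congr 1
        rw [integral_finset_sum _ fun k _ => hik (σ k)]
      have hxkval : ∀ k : ℕ, x (xk k) =
          (∫ ω, |h k ω| ∂(dualApply m x).toJordanDecomposition.posPart) -
          ∫ ω, |h k ω| ∂(dualApply m x).toJordanDecomposition.negPart := by
        intro k
        rw [hxk x k]
        unfold sIntegral
        simp only [Measure.restrict_univ]
      have hP := h2 _ (hpN x) fun k => integrable_posPart (habs_int k x)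
      have hQ := h2 _ (hnN x) fun k => integrable_negPart (habs_int k x)
      rw [h1]
      unfold sIntegral
      simp only [Measure.restrict_univ]
      calc (n : ℝ)⁻¹ * ∑ k ∈ Finset.range n, x (xk (σ k))
          = (n : ℝ)⁻¹ * ∑ k ∈ Finset.range n,
            ((∫ ω, |h (σ k) ω| ∂(dualApply m x).toJordanDecomposition.posPart) -
             ∫ ω, |h (σ k) ω| ∂(dualApply m x).toJordanDecomposition.negPart) := by
            congr 1
            exact Finset.sum_congr rfl fun k _ => hxkval (σ k)
        _ = (n : ℝ)⁻¹ * ∑ k ∈ Finset.range n,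
              (∫ ω, |h (σ k) ω| ∂(dualApply m x).toJordanDecomposition.posPart) -
            (n : ℝ)⁻¹ * ∑ k ∈ Finset.range n,
              (∫ ω, |h (σ k) ω| ∂(dualApply m x).toJordanDecomposition.negPart) := by
            rw [Finset.sum_sub_distrib]
            ring
        _ = (∫ ω, u ω ∂(dualApply m x).toJordanDecomposition.posPart) -
            ∫ ω, u ω ∂(dualApply m x).toJordanDecomposition.negPart := by
            rw [hP, hQ]
    have hsplit : ∀ A : Set Ω, MeasurableSet A → vA A + vA Aᶜ = w := by
      intro A hA
      refine (NormedSpace.eq_iff_forall_dual_eq (𝕜 := ℝ)).mpr fun x => ?_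
      rw [map_add, hvA A hA x, hvA Aᶜ hA.compl x, hwx x]
      unfold sIntegral
      have hp := integral_add_compl hA (integrable_posPart (hui x))
      have hn' := integral_add_compl hA (integrable_negPart (hui x))
      simp only [Measure.restrict_univ]
      linarith [hp, hn']
    have hnormA : ∀ A : Set Ω, MeasurableSet A → ‖vA A‖ ≤ ‖w‖ := by
      intro A hA
      refine norm_mono_of_posCone B (hcone A hA) ?_
      have hwA : w - vA A = vA Aᶜ := by
        rw [← hsplit A hA]; abel
      rw [hwA]
      exact hcone Aᶜ hA.compl
    show mNorm m gn ≤ 2 * ‖w‖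
    unfold mNorm
    refine Real.iSup_le (fun x => ?_) (by positivity)
    show (∫ ω, |gn ω| ∂(dualApply m x.1).totalVariation) ≤ 2 * ‖w‖
    obtain ⟨A1, B1, hA1, hB1, hrepr⟩ := abs_integral_repr (dualApply m x.1) hum (hui x.1)
    have habs2 : ∫ ω, |gn ω| ∂(dualApply m x.1).totalVariation =
        ∫ ω, |u ω| ∂(dualApply m x.1).totalVariation := by
      refine integral_congr_ae (Filter.Eventually.of_forall fun ω => ?_)
      show |gn ω| = |u ω|
      rw [hudef]
      exact (abs_abs _).symm
    rw [habs2, ← hrepr, ← hvA A1 hA1 x.1, ← hvA B1 hB1 x.1]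
    have hb1 : x.1 (vA A1) ≤ ‖vA A1‖ := by
      calc x.1 (vA A1) ≤ ‖x.1 (vA A1)‖ := le_abs_self _
        _ ≤ ‖x.1‖ * ‖vA A1‖ := (x.1).le_opNorm _
        _ ≤ 1 * ‖vA A1‖ := mul_le_mul_of_nonneg_right x.2 (norm_nonneg _)
        _ = ‖vA A1‖ := one_mul _
    have hb2 : -(x.1 (vA B1)) ≤ ‖vA B1‖ := by
      calc -(x.1 (vA B1)) ≤ ‖x.1 (vA B1)‖ := neg_le_abs _
        _ ≤ ‖x.1‖ * ‖vA B1‖ := (x.1).le_opNorm _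
        _ ≤ 1 * ‖vA B1‖ := mul_le_mul_of_nonneg_right x.2 (norm_nonneg _)
        _ = ‖vA B1‖ := one_mul _
    have hn1 := hnormA A1 hA1
    have hn2 := hnormA B1 hB1
    linarith [hb1, hb2, hn1, hn2]
  have hnn : ∀ n : ℕ, 0 ≤ mNorm m ((n : ℝ)⁻¹ • ∑ k ∈ Finset.range n, h (σ k)) := by
    intro n
    unfold mNorm
    exact Real.iSup_nonneg fun x => integral_nonneg fun ω => abs_nonneg _
  have h2lim : Tendsto (fun n : ℕ => 2 * ‖(n : ℝ)⁻¹ • ∑ k ∈ Finset.range n, xk (σ k)‖)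
      atTop (𝓝 0) := by
    have := hmean.const_mul 2
    simpa using this
  exact squeeze_zero hnn key h2lim


end Paper
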